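/- Let (W, T) be a topological space whose closed sets are generated by a prebase A of closed sets that is closed under finite intersections, and let B be the collection of finite unions of sets from A. Then W is Noetherian if and only if A satisfies the descending chain condition; in that case every closed set of T belongs to B, and every closed set is a finite union of irreducible closed sets from A, uniquely up to permutation when the decomposition is irredundant. -/

import Mathlib

universe u

namespace UAG

open Set TopologicalSpace Topology

variable {W : Type u}

/-- Finite unions of members of `A`. -/
def Bset (A : Set (Set W)) : Set (Set W) :=
  {b | ∃ s : Finset (Set W), (∀ z ∈ s, z ∈ A) ∧ b = ⋃₀ ↑s}

/-- Strongly irreducible members of `A`. -/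
def SIrr (A : Set (Set W)) (p : Set W) : Prop :=
  p ∈ A ∧ ∀ s : Finset (Set W), (∀ z ∈ s, z ∈ A) → p ⊆ ⋃₀ ↑s → ∃ z ∈ s, p ⊆ z

lemma mem_Bset_of_mem_A {A : Set (Set W)} {a : Set W} (ha : a ∈ A) : a ∈ Bset A :=
  ⟨{a}, by simpa using ha, by simp⟩

lemma empty_mem_Bset (A : Set (Set W)) : (∅ : Set W) ∈ Bset A :=
  ⟨∅, by simp, by simp⟩

lemma union_mem_Bset {A : Set (Set W)} {b₁ b₂ : Set W} (h₁ : b₁ ∈ Bset A) (h₂ : b₂ ∈ Bset A) :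
    b₁ ∪ b₂ ∈ Bset A := by
  classical
  obtain ⟨s₁, hs₁, rfl⟩ := h₁
  obtain ⟨s₂, hs₂, rfl⟩ := h₂
  refine ⟨s₁ ∪ s₂, ?_, ?_⟩
  · intro z hz
    rcases Finset.mem_union.1 hz with h | h
    exacts [hs₁ z h, hs₂ z h]
  · rw [Finset.coe_union, Set.sUnion_union]

lemma inter_mem_Bset {A : Set (Set W)} (hinter : ∀ s ∈ A, ∀ t ∈ A, s ∩ t ∈ A)
    {b₁ b₂ : Set W} (h₁ : b₁ ∈ Bset A) (h₂ : b₂ ∈ Bset A) : b₁ ∩ b₂ ∈ Bset A := by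
  classical
  obtain ⟨s₁, hs₁, rfl⟩ := h₁
  obtain ⟨s₂, hs₂, rfl⟩ := h₂
  refine ⟨Finset.image₂ (· ∩ ·) s₁ s₂, ?_, ?_⟩
  · intro z hz
    obtain ⟨a, ha, b, hb, rfl⟩ := Finset.mem_image₂.1 hz
    exact hinter a (hs₁ a ha) b (hs₂ b hb)
  · ext x
    constructor
    · rintro ⟨⟨a, ha, hxa⟩, ⟨b, hb, hxb⟩⟩
      exact ⟨a ∩ b, Finset.mem_coe.2 (Finset.mem_image₂.2 ⟨a, Finset.mem_coe.1 ha, b,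
        Finset.mem_coe.1 hb, rfl⟩), hxa, hxb⟩
    · rintro ⟨z, hz, hxz⟩
      obtain ⟨a, ha, b, hb, rfl⟩ := Finset.mem_image₂.1 (Finset.mem_coe.1 hz)
      exact ⟨⟨a, ha, hxz.1⟩, ⟨b, hb, hxz.2⟩⟩

lemma isClosed_of_mem_A (A : Set (Set W)) {a : Set W} (ha : a ∈ A) :
    IsClosed[generateFrom (compl '' A)] a := by
  letI : TopologicalSpace W := generateFrom (compl '' A)
  exact ⟨TopologicalSpace.GenerateOpen.basic _ ⟨a, ha, rfl⟩⟩

lemma isClosed_of_mem_Bset (A : Set (Set W)) {b : Set W} (hb : b ∈ Bset A) :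
    IsClosed[generateFrom (compl '' A)] b := by
  letI : TopologicalSpace W := generateFrom (compl '' A)
  obtain ⟨s, hs, rfl⟩ := hb
  rw [Set.sUnion_eq_biUnion]
  exact Set.Finite.isClosed_biUnion (s.finite_toSet) fun a ha =>
    isClosed_of_mem_A A (hs a ha)

/-- Every point outside a closed set is separated from it by a member of `Bset A`. -/
lemma exists_Bset_of_not_mem (A : Set (Set W)) {Y : Set W}
    (hY : IsClosed[generateFrom (compl '' A)] Y) {x : W} (hx : x ∉ Y) :
    ∃ b ∈ Bset A, Y ⊆ b ∧ x ∉ b := by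
  have haux : ∀ U : Set W, TopologicalSpace.GenerateOpen (compl '' A) U →
      ∀ x ∈ U, ∃ b ∈ Bset A, Uᶜ ⊆ b ∧ x ∉ b := by
    intro U hU
    induction hU with
    | basic u hu =>
      intro x hx
      obtain ⟨a, ha, rfl⟩ := hu
      exact ⟨a, mem_Bset_of_mem_A ha, by simp, hx⟩
    | univ =>
      intro x _
      exact ⟨∅, empty_mem_Bset A, by simp, Set.notMem_empty x⟩
    | inter u v hu hv ihu ihv =>
      rintro x ⟨hxu, hxv⟩
      obtain ⟨b₁, hb₁, hb₁s, hxb₁⟩ := ihu x hxu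
      obtain ⟨b₂, hb₂, hb₂s, hxb₂⟩ := ihv x hxv
      refine ⟨b₁ ∪ b₂, union_mem_Bset hb₁ hb₂, ?_, ?_⟩
      · rw [Set.compl_inter]
        exact Set.union_subset_union hb₁s hb₂s
      · simp [hxb₁, hxb₂]
    | sUnion S hS ih =>
      rintro x ⟨u, huS, hxu⟩
      obtain ⟨b, hb, hbs, hxb⟩ := ih u huS x hxu
      exact ⟨b, hb, (Set.compl_subset_compl.2 (Set.subset_sUnion_of_mem huS)).trans hbs, hxb⟩
  have := haux Yᶜ hY.isOpen_compl x hx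
  simpa using this

lemma chain_anti {f : ℕ → Set W} (h : ∀ k, f (k + 1) ⊆ f k) :
    ∀ i j, i ≤ j → f j ⊆ f i := by
  intro i j hij
  induction j, hij using Nat.le_induction with
  | base => exact Set.Subset.rfl
  | succ n hn ih => exact (h n).trans ih

lemma wf_of_stabilize (C : Set (Set W))
    (h : ∀ f : ℕ → Set W, (∀ k, f k ∈ C) → (∀ k, f (k + 1) ⊆ f k) →
      ∃ N, ∀ k, N ≤ k → f k = f N) :
    WellFounded (fun a b : {x : Set W // x ∈ C} => a.1 ⊂ b.1) := by
  haveI : IsIrrefl {x : Set W // x ∈ C} (fun a b => a.1 ⊂ b.1) :=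
    ⟨fun a h => (ssubset_irrefl a.1) h⟩
  haveI : IsTrans {x : Set W // x ∈ C} (fun a b => a.1 ⊂ b.1) :=
    ⟨fun _ _ _ h1 h2 => h1.trans h2⟩
  haveI : IsStrictOrder {x : Set W // x ∈ C} (fun a b => a.1 ⊂ b.1) := ⟨⟩
  rw [RelEmbedding.wellFounded_iff_isEmpty]
  by_contra h'
  rw [not_isEmpty_iff] at h'
  obtain ⟨g⟩ := h'
  have hlt : ∀ k : ℕ, (g (k + 1)).1 ⊂ (g k).1 := fun k => g.map_rel_iff.2 (Nat.lt_succ_self k)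
  obtain ⟨N, hN⟩ := h (fun k => (g k).1) (fun k => (g k).2) (fun k => (hlt k).subset)
  exact (hlt N).ne (hN (N + 1) (Nat.le_succ N))

/-- Key stabilization result: DCC on `A` implies DCC on `Bset A`. -/
lemma stabilize_Bset {A : Set (Set W)} (hunion : Set.univ ∈ A)
    (hinter : ∀ s ∈ A, ∀ t ∈ A, s ∩ t ∈ A)
    (hdcc : ∀ f : ℕ → Set W, (∀ k, f k ∈ A) → (∀ k, f (k + 1) ⊆ f k) →
      ∃ N, ∀ k, N ≤ k → f k = f N) :
    ∀ g : ℕ → Set W, (∀ k, g k ∈ Bset A) → (∀ k, g (k + 1) ⊆ g k) →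
      ∃ N, ∀ k, N ≤ k → g k = g N := by
  have hwfA := wf_of_stabilize A hdcc
  have main : ∀ a : {x : Set W // x ∈ A}, ∀ g : ℕ → Set W, (∀ k, g k ∈ Bset A) →
      (∀ k, g (k + 1) ⊆ g k) → (∀ k, g k ⊆ a.1) → ∃ N, ∀ k, N ≤ k → g k = g N := by
    intro a
    induction a using WellFounded.induction hwfA with
    | _ a IH =>
    intro g hgB hdec hbound
    by_cases hconst : ∀ k, g k = g 0
    · exact ⟨0, fun k _ => hconst k⟩
    push_neg at hconst
    obtain ⟨k₀, hk₀⟩ := hconst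
    have hmono := chain_anti hdec
    have hk0a : g k₀ ⊂ a.1 := by
      refine ⟨hbound k₀, fun hcontra => ?_⟩
      exact hk₀ (subset_antisymm (hmono 0 k₀ (Nat.zero_le _)) ((hbound 0).trans hcontra))
    obtain ⟨s₀, hs₀A, hs₀⟩ := hgB k₀
    have hpsub : ∀ p ∈ s₀, p ⊂ a.1 := fun p hp =>
      Set.ssubset_of_subset_of_ssubset
        (hs₀ ▸ Set.subset_sUnion_of_mem (Finset.mem_coe.2 hp) : p ⊆ g k₀) hk0a
    have key : ∀ p : {x // x ∈ s₀}, ∃ N, ∀ k, N ≤ k →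
        g (k₀ + k) ∩ p.1 = g (k₀ + N) ∩ p.1 := by
      intro p
      refine IH ⟨p.1, hs₀A p.1 p.2⟩ (hpsub p.1 p.2) (fun k => g (k₀ + k) ∩ p.1)
        (fun k => inter_mem_Bset hinter (hgB (k₀ + k))
          (mem_Bset_of_mem_A (hs₀A p.1 p.2))) (fun k => ?_) (fun k => Set.inter_subset_right)
      rw [Nat.add_succ]
      exact Set.inter_subset_inter (hdec _) Set.Subset.rfl
    choose Nf hNf using key
    set M := s₀.attach.sup Nf with hM
    have hdecomp : ∀ j, k₀ ≤ j → g j = ⋃ p ∈ s₀, (g j ∩ p) := by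
      intro j hj
      apply subset_antisymm
      · intro x hx
        have hx' : x ∈ ⋃₀ (↑s₀ : Set (Set W)) := hs₀ ▸ hmono k₀ j hj hx
        obtain ⟨p, hp, hxp⟩ := hx'
        exact Set.mem_biUnion (Finset.mem_coe.1 hp) ⟨hx, hxp⟩
      · intro x hx
        simp only [Set.mem_iUnion] at hx
        obtain ⟨p, hp, hxg, _⟩ := hx
        exact hxg
    refine ⟨k₀ + M, fun k hk => ?_⟩
    calc g k = ⋃ p ∈ s₀, (g k ∩ p) := hdecomp k (by omega)
      _ = ⋃ p ∈ s₀, (g (k₀ + M) ∩ p) := by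
          apply Set.iUnion₂_congr
          intro p hp
          have h1 := hNf ⟨p, hp⟩ (k - k₀)
            (le_trans (Finset.le_sup (Finset.mem_attach _ ⟨p, hp⟩)) (by omega))
          have h2 := hNf ⟨p, hp⟩ M (Finset.le_sup (Finset.mem_attach _ ⟨p, hp⟩))
          rw [show k₀ + (k - k₀) = k by omega] at h1
          exact h1.trans h2.symm
      _ = g (k₀ + M) := (hdecomp (k₀ + M) (by omega)).symm
  intro g hgB hdec
  exact main ⟨Set.univ, hunion⟩ g hgB hdec fun k => Set.subset_univ _

/-- Under DCC, every closed set is a finite union of members of `A`. -/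
lemma closed_mem_Bset {A : Set (Set W)} (hunion : Set.univ ∈ A)
    (hinter : ∀ s ∈ A, ∀ t ∈ A, s ∩ t ∈ A)
    (hdcc : ∀ f : ℕ → Set W, (∀ k, f k ∈ A) → (∀ k, f (k + 1) ⊆ f k) →
      ∃ N, ∀ k, N ≤ k → f k = f N)
    {Y : Set W} (hY : IsClosed[generateFrom (compl '' A)] Y) : Y ∈ Bset A := by
  have hwfB := wf_of_stabilize (Bset A) (stabilize_Bset hunion hinter hdcc)
  set S : Set {x : Set W // x ∈ Bset A} := {b | Y ⊆ b.1} with hS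
  have hne : S.Nonempty := ⟨⟨Set.univ, mem_Bset_of_mem_A hunion⟩, Set.subset_univ _⟩
  obtain ⟨m, hmS, hmin⟩ := hwfB.has_min S hne
  have hmin2 : ∀ b ∈ Bset A, Y ⊆ b → m.1 ⊆ b := by
    intro b hb hYb
    have hxS : (⟨m.1 ∩ b, inter_mem_Bset hinter m.2 hb⟩ : {x : Set W // x ∈ Bset A}) ∈ S :=
      Set.subset_inter hmS hYb
    have := hmin _ hxS
    have heq : m.1 ∩ b = m.1 := by
      by_contra hne'
      exact this ⟨Set.inter_subset_left, fun hsub => hne' (subset_antisymm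
        Set.inter_subset_left hsub)⟩
    exact Set.inter_eq_left.1 heq
  have hYm : Y = m.1 := by
    apply subset_antisymm hmS
    intro x hx
    by_contra hxY
    obtain ⟨b, hb, hYb, hxb⟩ := exists_Bset_of_not_mem A hY hxY
    exact hxb (hmin2 b hb hYb hx)
  exact hYm ▸ m.2

lemma sirr_nonempty {A : Set (Set W)} {p : Set W} (hp : SIrr A p) : p.Nonempty := by
  by_contra h
  rw [Set.not_nonempty_iff_eq_empty] at h
  obtain ⟨z, hz, -⟩ := hp.2 ∅ (by simp) (by simp [h])
  exact Finset.notMem_empty z hz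

lemma sirr_isIrreducible {A : Set (Set W)} (hunion : Set.univ ∈ A)
    (hinter : ∀ s ∈ A, ∀ t ∈ A, s ∩ t ∈ A)
    (hdcc : ∀ f : ℕ → Set W, (∀ k, f k ∈ A) → (∀ k, f (k + 1) ⊆ f k) →
      ∃ N, ∀ k, N ≤ k → f k = f N)
    {p : Set W} (hp : SIrr A p) :
    @IsIrreducible W (generateFrom (compl '' A)) p := by
  classical
  letI : TopologicalSpace W := generateFrom (compl '' A)
  refine ⟨sirr_nonempty hp, isPreirreducible_iff_isClosed_union_isClosed.2 ?_⟩
  intro z₁ z₂ hz₁ hz₂ hsub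
  obtain ⟨s₁, hs₁A, rfl⟩ := closed_mem_Bset hunion hinter hdcc hz₁
  obtain ⟨s₂, hs₂A, rfl⟩ := closed_mem_Bset hunion hinter hdcc hz₂
  have hcov : p ⊆ ⋃₀ ↑(s₁ ∪ s₂) := by
    rw [Finset.coe_union, Set.sUnion_union]
    exact hsub
  obtain ⟨z, hz, hpz⟩ := hp.2 (s₁ ∪ s₂) (fun z hz => by
    rcases Finset.mem_union.1 hz with h | h
    exacts [hs₁A z h, hs₂A z h]) hcov
  rcases Finset.mem_union.1 hz with h | h
  · exact Or.inl (hpz.trans (Set.subset_sUnion_of_mem (Finset.mem_coe.2 h)))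
  · exact Or.inr (hpz.trans (Set.subset_sUnion_of_mem (Finset.mem_coe.2 h)))

/-- Under DCC, every member of `A` is a finite union of strongly irreducible members. -/
lemma decomp_A {A : Set (Set W)}
    (hinter : ∀ s ∈ A, ∀ t ∈ A, s ∩ t ∈ A)
    (hdcc : ∀ f : ℕ → Set W, (∀ k, f k ∈ A) → (∀ k, f (k + 1) ⊆ f k) →
      ∃ N, ∀ k, N ≤ k → f k = f N) :
    ∀ a ∈ A, ∃ s : Finset (Set W), (∀ p ∈ s, SIrr A p ∧ p ⊆ a) ∧ a = ⋃₀ ↑s := by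
  have hwfA := wf_of_stabilize A hdcc
  have main : ∀ a : {x : Set W // x ∈ A}, ∃ s : Finset (Set W),
      (∀ p ∈ s, SIrr A p ∧ p ⊆ a.1) ∧ a.1 = ⋃₀ ↑s := by
    intro a
    induction a using WellFounded.induction hwfA with
    | _ a IH =>
    classical
    by_cases hirr : ∀ u : Finset (Set W), (∀ z ∈ u, z ∈ A) → a.1 ⊆ ⋃₀ ↑u → ∃ z ∈ u, a.1 ⊆ z
    · refine ⟨{a.1}, fun p hp => ?_, by simp⟩
      rw [Finset.mem_singleton] at hp
      subst hp
      exact ⟨⟨a.2, hirr⟩, Set.Subset.rfl⟩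
    push_neg at hirr
    obtain ⟨u, huA, hcov, hnsub⟩ := hirr
    have key : ∀ z : {x // x ∈ u}, ∃ s : Finset (Set W),
        (∀ p ∈ s, SIrr A p ∧ p ⊆ a.1 ∩ z.1) ∧ a.1 ∩ z.1 = ⋃₀ ↑s := by
      intro z
      refine IH ⟨a.1 ∩ z.1, hinter _ a.2 _ (huA z.1 z.2)⟩ ?_
      exact ⟨Set.inter_subset_left, fun h => hnsub z.1 z.2 fun x hx => (h hx).2⟩
    choose F hF using key
    refine ⟨u.attach.biUnion F, fun p hp => ?_, ?_⟩
    · obtain ⟨z, _, hpz⟩ := Finset.mem_biUnion.1 hp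
      exact ⟨((hF z).1 p hpz).1, ((hF z).1 p hpz).2.trans Set.inter_subset_left⟩
    · apply subset_antisymm
      · intro x hx
        obtain ⟨z, hz, hxz⟩ := hcov hx
        have hz' : z ∈ u := Finset.mem_coe.1 hz
        have : x ∈ ⋃₀ ↑(F ⟨z, hz'⟩) := (hF ⟨z, hz'⟩).2 ▸ (⟨hx, hxz⟩ : x ∈ a.1 ∩ z)
        obtain ⟨p, hp, hxp⟩ := this
        exact ⟨p, Finset.mem_coe.2 (Finset.mem_biUnion.2
          ⟨⟨z, hz'⟩, Finset.mem_attach _ _, Finset.mem_coe.1 hp⟩), hxp⟩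
      · intro x hx
        obtain ⟨p, hp, hxp⟩ := hx
        obtain ⟨z, _, hpz⟩ := Finset.mem_biUnion.1 (Finset.mem_coe.1 hp)
        exact (((hF z).1 p hpz).2.trans Set.inter_subset_left) hxp
  intro a ha
  exact main ⟨a, ha⟩

/-- Under DCC, every member of `Bset A` is a finite union of strongly irreducible members. -/
lemma decomp_Bset {A : Set (Set W)}
    (hinter : ∀ s ∈ A, ∀ t ∈ A, s ∩ t ∈ A)
    (hdcc : ∀ f : ℕ → Set W, (∀ k, f k ∈ A) → (∀ k, f (k + 1) ⊆ f k) →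
      ∃ N, ∀ k, N ≤ k → f k = f N)
    {b : Set W} (hb : b ∈ Bset A) :
    ∃ s : Finset (Set W), (∀ p ∈ s, SIrr A p ∧ p ⊆ b) ∧ b = ⋃₀ ↑s := by
  classical
  obtain ⟨s₀, hs₀A, rfl⟩ := hb
  have key : ∀ z : {x // x ∈ s₀}, ∃ s : Finset (Set W),
      (∀ p ∈ s, SIrr A p ∧ p ⊆ z.1) ∧ z.1 = ⋃₀ ↑s :=
    fun z => decomp_A hinter hdcc z.1 (hs₀A z.1 z.2)
  choose F hF using key
  refine ⟨s₀.attach.biUnion F, fun p hp => ?_, ?_⟩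
  · obtain ⟨z, _, hpz⟩ := Finset.mem_biUnion.1 hp
    exact ⟨((hF z).1 p hpz).1, ((hF z).1 p hpz).2.trans
      (Set.subset_sUnion_of_mem (Finset.mem_coe.2 z.2))⟩
  · apply subset_antisymm
    · rintro x ⟨z, hz, hxz⟩
      have hz' : z ∈ s₀ := Finset.mem_coe.1 hz
      have : x ∈ ⋃₀ ↑(F ⟨z, hz'⟩) := (hF ⟨z, hz'⟩).2 ▸ hxz
      obtain ⟨p, hp, hxp⟩ := this
      exact ⟨p, Finset.mem_coe.2 (Finset.mem_biUnion.2
        ⟨⟨z, hz'⟩, Finset.mem_attach _ _, Finset.mem_coe.1 hp⟩), hxp⟩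
    · rintro x ⟨p, hp, hxp⟩
      obtain ⟨z, _, hpz⟩ := Finset.mem_biUnion.1 (Finset.mem_coe.1 hp)
      exact (((hF z).1 p hpz).2.trans
        (Set.subset_sUnion_of_mem (Finset.mem_coe.2 z.2))) hxp

lemma exists_maximal_above {s : Finset (Set W)} {p : Set W} (hp : p ∈ s) :
    ∃ q ∈ s, p ⊆ q ∧ ∀ r ∈ s, q ⊆ r → q = r := by
  classical
  have hne : (s.filter (fun q => p ⊆ q)).Nonempty :=
    ⟨p, Finset.mem_filter.2 ⟨hp, Set.Subset.rfl⟩⟩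
  obtain ⟨q, hqM⟩ := Finset.exists_maximal hne
  obtain ⟨hq, hqmax⟩ : q ∈ s.filter (fun q => p ⊆ q) ∧ ∀ r ∈ s.filter (fun q => p ⊆ q), ¬ q < r :=
    ⟨hqM.prop, fun r hr hlt => hlt.not_ge (hqM.2 hr hlt.le)⟩
  rw [Finset.mem_filter] at hq
  refine ⟨q, hq.1, hq.2, fun r hr hqr => ?_⟩
  by_contra hne'
  exact hqmax r (Finset.mem_filter.2 ⟨hr, hq.2.trans hqr⟩) (lt_of_le_of_ne hqr hne')

/-- Let `(W, T)` be a topological space whose closed sets are generated by a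
prebase `A` of closed sets (i.e. `T` is generated by the complements of members of `A`) which is
closed under finite intersections.  Then `W` is Noetherian iff `A` satisfies the descending chain
condition; in that case every closed set is a finite union of members of `A`, and every closed
set is a finite union of irreducible closed sets from `A`, uniquely up to permutation when the
decomposition is irredundant. -/
theorem noetherian_prebase (W : Type u) (A : Set (Set W))
    (T : TopologicalSpace W)
    (hgen : T = TopologicalSpace.generateFrom (compl '' A))
    (hunion : Set.univ ∈ A)
    (hinter : ∀ s ∈ A, ∀ t ∈ A, s ∩ t ∈ A) :
    (@TopologicalSpace.NoetherianSpace W T ↔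
      ∀ f : ℕ → Set W, (∀ k, f k ∈ A) → (∀ k, f (k + 1) ⊆ f k) →
        ∃ N, ∀ k, N ≤ k → f k = f N) ∧
    (@TopologicalSpace.NoetherianSpace W T →
      ∀ Y : Set W, @IsClosed W T Y →
        (∃ s : Finset (Set W), (∀ Z ∈ s, Z ∈ A) ∧ Y = ⋃₀ ↑s) ∧
        (∃ s : Finset (Set W),
          (∀ Z ∈ s, Z ∈ A ∧ @IsClosed W T Z ∧ @IsIrreducible W T Z) ∧
          Y = ⋃₀ ↑s ∧
          (∀ Z₁ ∈ s, ∀ Z₂ ∈ s, Z₁ ⊆ Z₂ → Z₁ = Z₂) ∧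
          (∀ t : Finset (Set W),
            (∀ Z ∈ t, Z ∈ A ∧ @IsClosed W T Z ∧ @IsIrreducible W T Z) →
            Y = ⋃₀ ↑t → (∀ Z₁ ∈ t, ∀ Z₂ ∈ t, Z₁ ⊆ Z₂ → Z₁ = Z₂) → t = s))) := by
  subst hgen
  classical
  letI T' : TopologicalSpace W := generateFrom (compl '' A)
  have hiff : @NoetherianSpace W T' ↔
      ∀ f : ℕ → Set W, (∀ k, f k ∈ A) → (∀ k, f (k + 1) ⊆ f k) →
        ∃ N, ∀ k, N ≤ k → f k = f N := by
    constructor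
    · intro hN f hfA hdec
      have h01 := (noetherianSpace_TFAE W).out 0 1
      have hwf : WellFounded ((· < ·) : Closeds W → Closeds W → Prop) :=
        (h01.mp hN).wf
      obtain ⟨m, ⟨N, hNm⟩, hmin⟩ := hwf.has_min
        (Set.range (fun k => (⟨f k, isClosed_of_mem_A A (hfA k)⟩ : Closeds W))) ⟨_, ⟨0, rfl⟩⟩
      refine ⟨N, fun k hk => ?_⟩
      by_contra hne
      have hle : (⟨f k, isClosed_of_mem_A A (hfA k)⟩ : Closeds W) ≤
          ⟨f N, isClosed_of_mem_A A (hfA N)⟩ := chain_anti hdec N k hk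
      have hlt : (⟨f k, isClosed_of_mem_A A (hfA k)⟩ : Closeds W) <
          ⟨f N, isClosed_of_mem_A A (hfA N)⟩ :=
        lt_of_le_of_ne hle (fun h => hne (congrArg (fun c : Closeds W => (c : Set W)) h))
      subst hNm
      exact hmin _ ⟨k, rfl⟩ hlt
    · intro hdcc
      have hwfB := wf_of_stabilize (Bset A) (stabilize_Bset hunion hinter hdcc)
      have h01 := (noetherianSpace_TFAE W).out 0 1
      refine h01.mpr ⟨?_⟩
      refine Subrelation.wf ?_ (InvImage.wf (fun c : Closeds W =>
        (⟨(c : Set W), closed_mem_Bset hunion hinter hdcc c.2⟩ :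
          {x : Set W // x ∈ Bset A})) hwfB)
      intro c d hcd
      exact SetLike.coe_ssubset_coe.2 hcd
  refine ⟨hiff, ?_⟩
  intro hN Y hY
  have hdcc := hiff.mp hN
  have hYB := closed_mem_Bset hunion hinter hdcc hY
  refine ⟨hYB, ?_⟩
  obtain ⟨t₀, ht₀, ht₀Y⟩ := decomp_Bset hinter hdcc hYB
  set s := t₀.filter (fun p => ∀ q ∈ t₀, p ⊆ q → p = q) with hsdef
  have hsmem : ∀ p ∈ s, p ∈ t₀ ∧ ∀ q ∈ t₀, p ⊆ q → p = q := fun p hp =>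
    Finset.mem_filter.1 hp
  have hsY : Y = ⋃₀ ↑s := by
    rw [ht₀Y]
    apply subset_antisymm
    · rintro x ⟨p, hp, hxp⟩
      obtain ⟨q, hq, hpq, hqmax⟩ := exists_maximal_above (Finset.mem_coe.1 hp)
      exact ⟨q, Finset.mem_coe.2 (Finset.mem_filter.2 ⟨hq, hqmax⟩), hpq hxp⟩
    · rintro x ⟨p, hp, hxp⟩
      exact ⟨p, Finset.mem_coe.2 (hsmem p (Finset.mem_coe.1 hp)).1, hxp⟩
  have hprops : ∀ Z ∈ s, Z ∈ A ∧ IsClosed Z ∧ IsIrreducible Z := by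
    intro Z hZ
    have h := (ht₀ Z (hsmem Z hZ).1).1
    exact ⟨h.1, isClosed_of_mem_A A h.1, sirr_isIrreducible hunion hinter hdcc h⟩
  have hanti : ∀ Z₁ ∈ s, ∀ Z₂ ∈ s, Z₁ ⊆ Z₂ → Z₁ = Z₂ := fun Z₁ h1 Z₂ h2 hsub =>
    (hsmem Z₁ h1).2 Z₂ (hsmem Z₂ h2).1 hsub
  refine ⟨s, hprops, hsY, hanti, ?_⟩
  intro t ht htY htanti
  have hdom : ∀ u v : Finset (Set W), (∀ Z ∈ u, IsIrreducible Z) →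
      (∀ Z ∈ v, IsClosed Z) → (⋃₀ ↑u : Set W) ⊆ ⋃₀ ↑v → ∀ Z ∈ u, ∃ Z' ∈ v, Z ⊆ Z' := by
    intro u v hu hv hsub Z hZ
    exact (isIrreducible_iff_sUnion_isClosed.1 (hu Z hZ)) v hv
      ((Set.subset_sUnion_of_mem (Finset.mem_coe.2 hZ)).trans hsub)
  have h1 : ∀ Z ∈ t, ∃ Z' ∈ s, Z ⊆ Z' :=
    hdom t s (fun Z hZ => (ht Z hZ).2.2) (fun Z hZ => (hprops Z hZ).2.1)
      (by rw [← htY, hsY])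
  have h2 : ∀ Z ∈ s, ∃ Z' ∈ t, Z ⊆ Z' :=
    hdom s t (fun Z hZ => (hprops Z hZ).2.2) (fun Z hZ => (ht Z hZ).2.1)
      (by rw [← htY, hsY])
  apply Finset.Subset.antisymm
  · intro Z hZ
    obtain ⟨Z₁, hZ₁, hZZ₁⟩ := h1 Z hZ
    obtain ⟨Z₂, hZ₂, hZ₁Z₂⟩ := h2 Z₁ hZ₁
    have hZeq : Z = Z₂ := htanti Z hZ Z₂ hZ₂ (hZZ₁.trans hZ₁Z₂)
    have hfin : Z₁ = Z := subset_antisymm (hZeq ▸ hZ₁Z₂) hZZ₁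
    exact hfin ▸ hZ₁
  · intro Z hZ
    obtain ⟨Z₁, hZ₁, hZZ₁⟩ := h2 Z hZ
    obtain ⟨Z₂, hZ₂, hZ₁Z₂⟩ := h1 Z₁ hZ₁
    have hZeq : Z = Z₂ := hanti Z hZ Z₂ hZ₂ (hZZ₁.trans hZ₁Z₂)
    have hfin : Z₁ = Z := subset_antisymm (hZeq ▸ hZ₁Z₂) hZZ₁
    exact hfin ▸ hZ₁

end UAG
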